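/- Shapley–Folkman–Starr bound: for nonempty compact sets K₁,…,K_N ⊆ ℝ^d, the Hausdorff distance between (1/N)(K₁+…+K_N) and (1/N)·convexHull(K₁+…+K_N) is at most (√d / N) · max_i sup_{k∈K_i} ‖k‖. -/

import Mathlib

open scoped Pointwise
open Finset

/-- Affinely independent points lying on an affine hyperplane `φ = c` with `c ≠ 0`
are linearly independent. -/
theorem sfs_linIndep {V : Type*} [AddCommGroup V] [Module ℝ V] {ι : Type*}
    (z : ι → V) (φ : V →ₗ[ℝ] ℝ) (c : ℝ) (hc : c ≠ 0) (hφ : ∀ i, φ (z i) = c)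
    (h : AffineIndependent ℝ z) : LinearIndependent ℝ z := by
  rw [linearIndependent_iff'] at *
  intro s g hg
  have hsum : ∑ i ∈ s, g i = 0 := by
    have := congrArg φ hg
    rw [map_sum, map_zero] at this
    simp only [map_smul, smul_eq_mul, hφ] at this
    rw [← Finset.sum_mul] at this
    exact (mul_eq_zero.1 this).resolve_right hc
  exact affineIndependent_iff.1 h s g hsum hg

/-- Greedy step: averaging over a convex representation. -/
theorem sfs_greedy {E : Type*} [NormedAddCommGroup E] [InnerProductSpace ℝ E]
    (K : Set E) (L : ℝ) (hL : ∀ k ∈ K, ‖k‖ ≤ L) {x : E}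
    (hx : x ∈ convexHull ℝ K) (c : E) :
    ∃ k ∈ K, ‖c + x - k‖ ^ 2 ≤ ‖c‖ ^ 2 + L ^ 2 := by
  obtain ⟨ι, _, w, z, hw0, hw1, hz, hxz⟩ := mem_convexHull_iff_exists_fintype.1 hx
  by_contra hcon
  push_neg at hcon
  have key : ∑ i, w i * ‖c + x - z i‖ ^ 2 ≤ ‖c‖ ^ 2 + L ^ 2 := by
    have expand : ∀ i, ‖c + x - z i‖ ^ 2
        = ‖c + x‖ ^ 2 - 2 * (inner ℝ (c + x) (z i) : ℝ) + ‖z i‖ ^ 2 := by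
      intro i; rw [norm_sub_sq_real]
    calc ∑ i, w i * ‖c + x - z i‖ ^ 2
        = ∑ i, (w i * ‖c + x‖ ^ 2 - 2 * (inner ℝ (c + x) (w i • z i) : ℝ)
            + w i * ‖z i‖ ^ 2) := by
          refine Finset.sum_congr rfl fun i _ => ?_
          rw [expand i, real_inner_smul_right]; ring
      _ = (∑ i, w i) * ‖c + x‖ ^ 2 - 2 * (inner ℝ (c + x) (∑ i, w i • z i) : ℝ)
            + ∑ i, w i * ‖z i‖ ^ 2 := by
          rw [inner_sum, Finset.sum_mul, Finset.mul_sum]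
          rw [Finset.sum_add_distrib, Finset.sum_sub_distrib]
      _ = ‖c‖ ^ 2 - ‖x‖ ^ 2 + ∑ i, w i * ‖z i‖ ^ 2 := by
          rw [hw1, hxz, one_mul, norm_add_sq_real, inner_add_left,
            real_inner_self_eq_norm_sq]
          ring
      _ ≤ ‖c‖ ^ 2 - ‖x‖ ^ 2 + ∑ i, w i * L ^ 2 := by
          have : ∀ i ∈ Finset.univ, w i * ‖z i‖ ^ 2 ≤ w i * L ^ 2 := by
            intro i _
            have h1 : ‖z i‖ ≤ L := hL _ (hz i)
            have h0 : (0:ℝ) ≤ ‖z i‖ := norm_nonneg _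
            have : ‖z i‖ ^ 2 ≤ L ^ 2 := by nlinarith
            exact mul_le_mul_of_nonneg_left this (hw0 i)
          have := Finset.sum_le_sum this
          linarith
      _ ≤ ‖c‖ ^ 2 + L ^ 2 := by
          rw [← Finset.sum_mul, hw1, one_mul]
          nlinarith [sq_nonneg ‖x‖]
  have hlt : (‖c‖ ^ 2 + L ^ 2) * 1 < ∑ i, w i * ‖c + x - z i‖ ^ 2 := by
    obtain ⟨i0, hi0⟩ : ∃ i, w i ≠ 0 := by
      by_contra hall
      push_neg at hall
      simp [hall] at hw1
    have hi0' : 0 < w i0 := lt_of_le_of_ne (hw0 i0) (Ne.symm hi0)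
    have heach : ∀ i ∈ Finset.univ, (‖c‖ ^ 2 + L ^ 2) * w i ≤ w i * ‖c + x - z i‖ ^ 2 := by
      intro i _
      rw [mul_comm]
      exact mul_le_mul_of_nonneg_left (le_of_lt (hcon _ (hz i))) (hw0 i)
    have hstrict : (‖c‖ ^ 2 + L ^ 2) * w i0 < w i0 * ‖c + x - z i0‖ ^ 2 := by
      rw [mul_comm]
      exact (mul_lt_mul_iff_right₀ hi0').2 (hcon _ (hz i0))
    calc (‖c‖ ^ 2 + L ^ 2) * 1 = ∑ i, (‖c‖ ^ 2 + L ^ 2) * w i := by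
          rw [← Finset.mul_sum, hw1]
      _ < ∑ i, w i * ‖c + x - z i‖ ^ 2 :=
          Finset.sum_lt_sum heach ⟨i0, Finset.mem_univ i0, hstrict⟩
  nlinarith [key, hlt]

/-- Greedy selection over a finite family. -/
theorem sfs_select {E : Type*} [NormedAddCommGroup E] [InnerProductSpace ℝ E]
    {ι : Type*} [DecidableEq ι] (K : ι → Set E) (x : ι → E) (L : ι → ℝ)
    (hK : ∀ i, ∀ k ∈ K i, ‖k‖ ≤ L i) (hx : ∀ i, x i ∈ convexHull ℝ (K i))
    (hne : ∀ i, (K i).Nonempty) (s : Finset ι) :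
    ∃ f : ι → E, (∀ i ∈ s, f i ∈ K i) ∧
      ‖∑ i ∈ s, (x i - f i)‖ ^ 2 ≤ ∑ i ∈ s, (L i) ^ 2 := by
  classical
  induction s using Finset.induction_on with
  | empty =>
      exact ⟨fun i => (hne i).some, by simp, by simp⟩
  | insert a s ha ih =>
      obtain ⟨f, hf, hfs⟩ := ih
      obtain ⟨k, hk, hkle⟩ := sfs_greedy (K a) (L a) (hK a) (hx a)
        (∑ i ∈ s, (x i - f i))
      refine ⟨Function.update f a k, ?_, ?_⟩
      · intro i hi
        rcases Finset.mem_insert.1 hi with rfl | hi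
        · rwa [Function.update_self]
        · rw [Function.update_of_ne (ne_of_mem_of_not_mem hi ha)]
          exact hf i hi
      · rw [Finset.sum_insert ha, Function.update_self]
        have hre : ∀ i ∈ s, x i - Function.update f a k i = x i - f i := by
          intro i hi
          rw [Function.update_of_ne (ne_of_mem_of_not_mem hi ha)]
        rw [Finset.sum_congr rfl hre]
        have : x a - k + ∑ i ∈ s, (x i - f i)
            = (∑ i ∈ s, (x i - f i)) + x a - k := by abel
        rw [this]
        calc ‖(∑ i ∈ s, (x i - f i)) + x a - k‖ ^ 2
            ≤ ‖∑ i ∈ s, (x i - f i)‖ ^ 2 + (L a) ^ 2 := hkle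
          _ ≤ ∑ i ∈ s, (L i) ^ 2 + (L a) ^ 2 := by linarith
          _ = (L a) ^ 2 + ∑ i ∈ s, (L i) ^ 2 := by ring
          _ = ∑ i ∈ insert a s, (L i) ^ 2 := by rw [Finset.sum_insert ha]

open Classical in
/-- The Shapley–Folkman lemma. -/
theorem sfs_sf {d N : ℕ} (hN : 0 < N) (K : Fin N → Set (EuclideanSpace ℝ (Fin d)))
    {x : EuclideanSpace ℝ (Fin d)} (hx : x ∈ ∑ i, convexHull ℝ (K i)) :
    ∃ y : Fin N → EuclideanSpace ℝ (Fin d), (∀ i, y i ∈ convexHull ℝ (K i)) ∧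
      (∑ i, y i) = x ∧ (Finset.univ.filter (fun i => y i ∉ K i)).card ≤ d := by
  classical
  have hNR : ((N : ℝ)) ≠ 0 := Nat.cast_ne_zero.2 hN.ne'
  obtain ⟨g, hg, hgx⟩ := (Set.mem_fintype_sum _ _).1 hx
  set A : Set (EuclideanSpace ℝ (Fin d) × (Fin N → ℝ)) :=
    ⋃ i : Fin N, (fun k => ((N : ℝ) • k, Pi.single i (N : ℝ))) '' K i with hA
  -- the lifted point is in the convex hull of A
  have hXA : ((x, fun _ => (1 : ℝ)) : EuclideanSpace ℝ (Fin d) × (Fin N → ℝ))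
      ∈ convexHull ℝ A := by
    have hmem : ∀ i : Fin N,
        (((N : ℝ) • g i, Pi.single i (N : ℝ)) : EuclideanSpace ℝ (Fin d) × (Fin N → ℝ))
          ∈ convexHull ℝ A := by
      intro i
      obtain ⟨κ, _, w, z, hw0, hw1, hz, hsum⟩ := mem_convexHull_iff_exists_fintype.1 (hg i)
      refine mem_convexHull_of_exists_fintype w
        (fun j => (((N : ℝ) • z j, Pi.single i (N : ℝ)) :
          EuclideanSpace ℝ (Fin d) × (Fin N → ℝ)))
        hw0 hw1 (fun j => Set.mem_iUnion.2 ⟨i, Set.mem_image_of_mem _ (hz j)⟩) ?_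
      refine Prod.ext ?_ ?_
      · simp only [Prod.fst_sum, Prod.smul_mk]
        calc ∑ j, w j • (N : ℝ) • z j = (N : ℝ) • ∑ j, w j • z j := by
              rw [Finset.smul_sum]; exact Finset.sum_congr rfl fun j _ => (smul_comm _ _ _)
          _ = (N : ℝ) • g i := by rw [hsum]
      · simp only [Prod.snd_sum, Prod.smul_mk]
        rw [← Finset.sum_smul, hw1, one_smul]
    have heq : ((x, fun _ => (1 : ℝ)) : EuclideanSpace ℝ (Fin d) × (Fin N → ℝ))
        = ∑ i : Fin N, (N : ℝ)⁻¹ •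
            (((N : ℝ) • g i, Pi.single i (N : ℝ)) :
              EuclideanSpace ℝ (Fin d) × (Fin N → ℝ)) := by
      refine Prod.ext ?_ ?_
      · simp only [Prod.fst_sum, Prod.smul_mk]
        rw [← hgx]
        exact (Finset.sum_congr rfl fun i _ => by
          rw [smul_smul, inv_mul_cancel₀ hNR, one_smul]).symm
      · simp only [Prod.snd_sum, Prod.smul_mk]
        have hs : ∀ i : Fin N, (N : ℝ)⁻¹ • (Pi.single i (N : ℝ) : Fin N → ℝ)
            = (Pi.single i (1 : ℝ) : Fin N → ℝ) := by
          intro i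
          rw [← Pi.single_smul, smul_eq_mul, inv_mul_cancel₀ hNR]
        rw [Finset.sum_congr rfl fun i _ => hs i]
        ext j
        simp [Pi.single_apply, Finset.sum_ite_eq']
    rw [heq]
    exact (convex_convexHull ℝ A).sum_mem (fun _ _ => by positivity)
      (by simp [Finset.sum_const, mul_inv_cancel₀ hNR]) (fun i _ => hmem i)
  -- Carathéodory
  obtain ⟨ι, hfin, z, w, hrange, haff, hwpos, hw1, hwz⟩ :=
    eq_pos_convex_span_of_mem_convexHull hXA
  -- decode the atoms
  have hzi : ∀ i : ι, ∃ a : Fin N, ∃ k, k ∈ K a ∧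
      (((N : ℝ) • k, Pi.single a (N : ℝ)) :
        EuclideanSpace ℝ (Fin d) × (Fin N → ℝ)) = z i := by
    intro i
    have := hrange (Set.mem_range_self i)
    simpa [hA, Set.mem_iUnion] using this
  choose idx pt hpt hzeq using hzi
  -- linear independence and cardinality bound
  have hφ : ∀ i : ι, ((∑ j : Fin N, LinearMap.proj j).comp
      (LinearMap.snd ℝ (EuclideanSpace ℝ (Fin d)) (Fin N → ℝ))) (z i) = (N : ℝ) := by
    intro i
    rw [← hzeq i]
    simp [Pi.single_apply, Finset.sum_ite_eq']
  have hlin : LinearIndependent ℝ z := sfs_linIndep z _ (N : ℝ) hNR hφ haff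
  have hcardle : Fintype.card ι ≤ d + N := by
    have := hlin.fintype_card_le_finrank
    rwa [Module.finrank_prod, finrank_euclideanSpace_fin, Module.finrank_pi,
      Fintype.card_fin] at this
  -- fibers
  set sa : Fin N → Finset ι := fun a => Finset.univ.filter (fun i => idx i = a) with hsa_def
  have hsnd : ∀ a : Fin N, ∑ i ∈ sa a, w i = (N : ℝ)⁻¹ := by
    intro a
    have h2 := congrArg (fun p : EuclideanSpace ℝ (Fin d) × (Fin N → ℝ) => p.2 a) hwz
    simp only [Prod.snd_sum, Finset.sum_apply] at h2
    have hterm : ∀ i : ι, (w i • z i).2 a = w i * (if a = idx i then (N : ℝ) else 0) := by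
      intro i
      rw [← hzeq i]
      simp [Pi.single_apply]
    rw [Finset.sum_congr rfl fun i _ => hterm i] at h2
    simp only [mul_ite, mul_zero] at h2
    rw [Finset.sum_ite, Finset.sum_const_zero, add_zero] at h2
    have hfilter : Finset.univ.filter (fun i => a = idx i) = sa a := by
      rw [hsa_def]; simp [eq_comm]
    rw [hfilter] at h2
    have h2' : (∑ i ∈ sa a, w i) * (N : ℝ) = 1 := by
      rw [Finset.sum_mul]; simpa using h2
    field_simp at h2' ⊢
    linarith
  have hsane : ∀ a : Fin N, (sa a).Nonempty := by
    intro a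
    rcases Finset.eq_empty_or_nonempty (sa a) with h | h
    · exfalso
      have := hsnd a
      rw [h, Finset.sum_empty] at this
      exact (inv_ne_zero hNR) this.symm
    · exact h
  refine ⟨fun a => ∑ i ∈ sa a, ((N : ℝ) * w i) • pt i, ?_, ?_, ?_⟩
  · intro a
    refine (convex_convexHull ℝ (K a)).sum_mem
      (fun i _ => mul_nonneg (Nat.cast_nonneg N) (hwpos i).le) ?_ ?_
    · rw [← Finset.mul_sum, hsnd a, mul_inv_cancel₀ hNR]
    · intro i hi
      have : idx i = a := (Finset.mem_filter.1 hi).2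
      exact subset_convexHull ℝ _ (this ▸ hpt i)
  · have hfib := Finset.sum_fiberwise Finset.univ idx (fun i => ((N : ℝ) * w i) • pt i)
    show (∑ a : Fin N, ∑ i ∈ sa a, ((N : ℝ) * w i) • pt i) = x
    rw [hsa_def] at *
    rw [hfib]
    have h1 := congrArg
      (fun p : EuclideanSpace ℝ (Fin d) × (Fin N → ℝ) => p.1) hwz
    simp only [Prod.fst_sum] at h1
    rw [← h1]
    refine Finset.sum_congr rfl fun i _ => ?_
    rw [← hzeq i]
    simp [smul_smul, mul_comm]
  · set y : Fin N → EuclideanSpace ℝ (Fin d) :=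
      fun a => ∑ i ∈ sa a, ((N : ℝ) * w i) • pt i with hy_def
    set bad := Finset.univ.filter (fun a => y a ∉ K a) with hbad
    show bad.card ≤ d
    have hc2 : ∀ a ∈ bad, 2 ≤ (sa a).card := by
      intro a ha
      by_contra hlt
      push_neg at hlt
      interval_cases h : (sa a).card
      · exact absurd h (Finset.card_ne_zero_of_mem (hsane a).choose_spec)
      · obtain ⟨i, hi⟩ := Finset.card_eq_one.1 h
        have hwi : w i = (N : ℝ)⁻¹ := by
          have := hsnd a
          rw [hi, Finset.sum_singleton] at this
          exact this
        have hya : y a = pt i := by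
          rw [hy_def]
          show (∑ j ∈ sa a, ((N : ℝ) * w j) • pt j) = pt i
          rw [hi, Finset.sum_singleton, hwi, mul_inv_cancel₀ hNR, one_smul]
        have hidx : idx i = a := by
          have : i ∈ sa a := hi ▸ Finset.mem_singleton_self i
          exact (Finset.mem_filter.1 this).2
        have : y a ∈ K a := hya ▸ (hidx ▸ hpt i)
        exact (Finset.mem_filter.1 ha).2 this
    have htot : (∑ a : Fin N, (sa a).card) = Fintype.card ι := by
      rw [← Finset.card_univ]
      exact (Finset.card_eq_sum_card_fiberwise (fun i _ => Finset.mem_univ (idx i))).symm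
    have hlow : N + bad.card ≤ ∑ a : Fin N, (sa a).card := by
      have h1 : ∀ a : Fin N, (1 + if a ∈ bad then 1 else 0) ≤ (sa a).card := by
        intro a
        split
        · exact hc2 a (by assumption)
        · exact (hsane a).card_pos
      calc N + bad.card = ∑ a : Fin N, (1 + if a ∈ bad then 1 else 0) := by
            rw [Finset.sum_add_distrib, Finset.sum_const, Finset.card_univ, Fintype.card_fin,
              smul_eq_mul, mul_one]
            congr 1
            simp [Finset.sum_ite_mem]
        _ ≤ ∑ a : Fin N, (sa a).card := Finset.sum_le_sum fun a _ => h1 a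
    omega

/-- Core estimate: any point of the convex hull of the sum is within `√d * L` of the sum. -/
theorem sfs_core {d N : ℕ} (hN : 0 < N) (K : Fin N → Set (EuclideanSpace ℝ (Fin d)))
    (hKne : ∀ i, (K i).Nonempty) {L : ℝ} (hL0 : 0 ≤ L)
    (hL : ∀ i, ∀ k ∈ K i, ‖k‖ ≤ L) {z : EuclideanSpace ℝ (Fin d)}
    (hz : z ∈ convexHull ℝ (∑ i, K i)) :
    ∃ p ∈ ∑ i, K i, dist z p ≤ Real.sqrt d * L := by
  classical
  rw [convexHull_sum] at hz
  obtain ⟨y, hy, hyx, hycard⟩ := sfs_sf hN K hz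
  set bad := Finset.univ.filter (fun i => y i ∉ K i) with hbad
  obtain ⟨f, hf, hfs⟩ := sfs_select K y (fun _ => L) hL hy hKne bad
  set g : Fin N → EuclideanSpace ℝ (Fin d) := fun i => if i ∈ bad then f i else y i with hg
  have hgmem : ∀ i, g i ∈ K i := by
    intro i
    rw [hg]
    by_cases hib : i ∈ bad
    · simp only [hib, if_true]; exact hf i hib
    · simp only [hib, if_false]
      have : ¬ (y i ∉ K i) := by
        intro hcon
        exact hib (Finset.mem_filter.2 ⟨Finset.mem_univ i, hcon⟩)
      exact not_not.1 this
  refine ⟨∑ i, g i, Set.finset_sum_mem_finset_sum Finset.univ K g (fun i _ => hgmem i), ?_⟩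
  have hdiff : z - ∑ i, g i = ∑ i ∈ bad, (y i - f i) := by
    rw [← hyx, ← Finset.sum_sub_distrib]
    rw [← Finset.sum_subset (Finset.subset_univ bad)
      (fun i _ hib => by rw [hg]; simp [hib])]
    refine Finset.sum_congr rfl fun i hib => ?_
    rw [hg]
    simp [hib]
  have hnorm2 : ‖∑ i ∈ bad, (y i - f i)‖ ^ 2 ≤ (d : ℝ) * L ^ 2 := by
    refine le_trans hfs ?_
    rw [Finset.sum_const, nsmul_eq_mul]
    have : (bad.card : ℝ) ≤ (d : ℝ) := Nat.cast_le.2 hycard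
    nlinarith [sq_nonneg L]
  rw [dist_eq_norm, hdiff]
  have h1 : ‖∑ i ∈ bad, (y i - f i)‖ ≤ Real.sqrt ((d : ℝ) * L ^ 2) := by
    have := Real.sqrt_le_sqrt hnorm2
    rwa [Real.sqrt_sq (norm_nonneg _)] at this
  have h2 : Real.sqrt ((d : ℝ) * L ^ 2) = Real.sqrt d * L := by
    rw [Real.sqrt_mul (Nat.cast_nonneg d), Real.sqrt_sq hL0]
  rw [h2] at h1
  exact h1

theorem shapley_folkman_starr
    {d N : ℕ} (hN : 0 < N) (K : Fin N → Set (EuclideanSpace ℝ (Fin d)))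
    (hKne : ∀ i, (K i).Nonempty) (hKc : ∀ i, IsCompact (K i)) :
    Metric.hausdorffDist
        ((N : ℝ)⁻¹ • ∑ i, K i)
        ((N : ℝ)⁻¹ • convexHull ℝ (∑ i, K i))
      ≤ (Real.sqrt d / N) * ⨆ i, sSup ((fun k => ‖k‖) '' K i) := by
  classical
  set L : ℝ := ⨆ i, sSup ((fun k => ‖k‖) '' K i) with hLdef
  have hbdd : ∀ i, BddAbove ((fun k => ‖k‖) '' K i) := fun i =>
    ((hKc i).image continuous_norm).bddAbove
  have hks : ∀ i, ∀ k ∈ K i, ‖k‖ ≤ sSup ((fun k => ‖k‖) '' K i) := fun i k hk =>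
    le_csSup (hbdd i) ⟨k, hk, rfl⟩
  have hrange : BddAbove (Set.range fun i => sSup ((fun k => ‖k‖) '' K i)) :=
    Set.Finite.bddAbove (Set.finite_range _)
  have hsupL : ∀ i, sSup ((fun k => ‖k‖) '' K i) ≤ L := fun i => le_ciSup hrange i
  have hL : ∀ i, ∀ k ∈ K i, ‖k‖ ≤ L := fun i k hk => (hks i k hk).trans (hsupL i)
  have hL0 : 0 ≤ L := by
    obtain ⟨k, hk⟩ := hKne ⟨0, hN⟩
    exact le_trans (norm_nonneg k) (hL _ k hk)
  have hr0 : 0 ≤ Real.sqrt d / N * L := by positivity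
  apply Metric.hausdorffDist_le_of_mem_dist hr0
  · intro x hx
    exact ⟨x, Set.smul_set_mono (subset_convexHull ℝ _) hx, by simpa using hr0⟩
  · intro x hx
    obtain ⟨z, hz, rfl⟩ := Set.mem_smul_set.1 hx
    obtain ⟨p, hp, hdzp⟩ := sfs_core hN K hKne hL0 hL hz
    refine ⟨(N : ℝ)⁻¹ • p, Set.smul_mem_smul_set hp, ?_⟩
    have hNR : (0:ℝ) < (N : ℝ) := Nat.cast_pos.2 hN
    rw [dist_smul₀, Real.norm_eq_abs, abs_of_nonneg (by positivity)]
    calc (N:ℝ)⁻¹ * dist z p ≤ (N:ℝ)⁻¹ * (Real.sqrt d * L) := by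
          exact mul_le_mul_of_nonneg_left hdzp (by positivity)
      _ = Real.sqrt d / N * L := by ring
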